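/- Under MCAR missing data with mask covariance matrix V invertible and E[X_j²] ≥ ℓ² for all j, the minimizer θ_imp* of the imputed risk R_imp(θ) = E[(Y − θᵀ(P⊙X))²] satisfies ‖θ_imp*‖₂² ≤ B_imp / (ℓ² λ_min(V)), where B_imp = inf_θ R_imp(θ) − inf_θ R(θ) and λ_min(V) is the smallest eigenvalue of V. -/

import Mathlib

open MeasureTheory ProbabilityTheory Matrix

-- L2 * L2 integrable
lemma aux_mulL1 {Ω : Type*} {mΩ : MeasurableSpace Ω} {μ : Measure Ω} {f g : Ω → ℝ}
    (hf : MemLp f 2 μ) (hg : MemLp g 2 μ) : Integrable (fun ω => f ω * g ω) μ := by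
  have h := hf.smul (r := 1) hg
  rw [← memLp_one_iff_integrable]
  simpa [smul_eq_mul, mul_comm, Pi.mul_def] using h

lemma aux_eig {d : ℕ} {A : Matrix (Fin d) (Fin d) ℝ} (hA : A.IsHermitian) (x : Fin d → ℝ) :
    (⨅ i, hA.eigenvalues i) * ∑ j, x j ^ 2 ≤ x ⬝ᵥ A.mulVec x := by
  classical
  set U : Matrix (Fin d) (Fin d) ℝ := (hA.eigenvectorUnitary : Matrix (Fin d) (Fin d) ℝ) with hUdef
  have hU : U ∈ Matrix.unitaryGroup (Fin d) ℝ := hA.eigenvectorUnitary.2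
  set y : Fin d → ℝ := (star U) *ᵥ x with hy
  have hvec : x ᵥ* U = y := by
    rw [hy, star_eq_conjTranspose, conjTranspose_eq_transpose_of_trivial, mulVec_transpose]
  have hAx : x ⬝ᵥ A.mulVec x = ∑ i, hA.eigenvalues i * y i ^ 2 := by
    conv_lhs => rw [hA.spectral_theorem, Unitary.conjStarAlgAut_apply, ← hUdef]
    rw [← mulVec_mulVec, ← mulVec_mulVec, dotProduct_mulVec, hvec]
    simp only [dotProduct, mulVec_diagonal, sq]
    exact Finset.sum_congr rfl fun i _ => by show y i * _ = _; simp [Function.comp]; ring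
  have hnorm : ∑ i, y i ^ 2 = ∑ j, x j ^ 2 := by
    have h1 : y ⬝ᵥ y = x ⬝ᵥ x := by
      nth_rewrite 2 [hy]
      rw [dotProduct_mulVec]
      have h2 : y ᵥ* star U = x := by
        rw [hy, star_eq_conjTranspose, conjTranspose_eq_transpose_of_trivial, vecMul_transpose,
          mulVec_mulVec]
        have h3 : U * Uᵀ = 1 := by
          have := (Matrix.mem_unitaryGroup_iff.mp hU)
          rwa [star_eq_conjTranspose, conjTranspose_eq_transpose_of_trivial] at this
        rw [h3, one_mulVec]
      rw [h2]
    simpa [dotProduct, sq] using h1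
  rw [hAx, ← hnorm, Finset.mul_sum]
  refine Finset.sum_le_sum fun i _ => ?_
  exact mul_le_mul_of_nonneg_right (ciInf_le (Set.Finite.bddBelow (Set.finite_range _)) i) (sq_nonneg _)


theorem stmt11 {Ω : Type*} {mΩ : MeasurableSpace Ω} (μ : Measure Ω) [IsProbabilityMeasure μ]
    {d : ℕ} (X : Ω → Fin d → ℝ) (Y : Ω → ℝ) (P : Ω → Fin d → ℝ)
    (hXm : Measurable X) (hYm : Measurable Y) (hPm : Measurable P)
    (hX2 : ∀ j, MemLp (fun ω => X ω j) 2 μ) (hY2 : MemLp Y 2 μ)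
    (hP01 : ∀ ω j, P ω j = 0 ∨ P ω j = 1)
    (hMCAR : IndepFun (fun ω => (X ω, Y ω)) P μ)
    (l : ℝ) (hl : 0 < l) (hmom : ∀ j, l ^ 2 ≤ ∫ ω, X ω j ^ 2 ∂μ)
    (V : Matrix (Fin d) (Fin d) ℝ)
    (hV : V = Matrix.of fun i j =>
      ∫ ω, P ω i * P ω j ∂μ - (∫ ω, P ω i ∂μ) * ∫ ω, P ω j ∂μ)
    (hVpd : V.PosDef)
    (Rimp R : (Fin d → ℝ) → ℝ)
    (hRimp : ∀ θ, Rimp θ = ∫ ω, (Y ω - ∑ j, θ j * (P ω j * X ω j)) ^ 2 ∂μ)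
    (hR : ∀ θ, R θ = ∫ ω, (Y ω - ∑ j, θ j * X ω j) ^ 2 ∂μ)
    (θimp : Fin d → ℝ) (hθimp : ∀ θ, Rimp θimp ≤ Rimp θ)
    (θs : Fin d → ℝ) (hθs : ∀ θ, R θs ≤ R θ) :
    ∑ j, θimp j ^ 2 ≤ (Rimp θimp - R θs) / (l ^ 2 * ⨅ i, hVpd.1.eigenvalues i) := by
  classical
  rcases Nat.eq_zero_or_pos d with hd | hd
  · subst hd
    have h1 : (⨅ i : Fin 0, hVpd.1.eigenvalues i) = 0 := by rw [iInf_of_isEmpty, Real.sInf_empty]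
    simp [h1]
  have : NeZero d := ⟨hd.ne'⟩
  -- basic measurability
  have hXj : ∀ j, Measurable fun ω => X ω j := fun j => (measurable_pi_apply j).comp hXm
  have hPj : ∀ j, Measurable fun ω => P ω j := fun j => (measurable_pi_apply j).comp hPm
  have hPb : ∀ ω j, ‖P ω j‖ ≤ 1 := by
    intro ω j; rcases hP01 ω j with h | h <;> simp [h]
  set ρ : Fin d → ℝ := fun j => ∫ ω, P ω j ∂μ with hρ
  set lam : ℝ := ⨅ i, hVpd.1.eigenvalues i with hlam
  -- lam positive
  have hlampos : 0 < lam := by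
    obtain ⟨i0, hi0⟩ := Finite.exists_min hVpd.1.eigenvalues
    have : lam = hVpd.1.eigenvalues i0 :=
      le_antisymm (ciInf_le (Set.Finite.bddBelow (Set.finite_range _)) i0) (le_ciInf hi0)
    rw [this]
    exact hVpd.eigenvalues_pos i0
  -- boundedness of P ω j - ρ j
  have hPmb : ∀ j ω, ‖P ω j - ρ j‖ ≤ 1 + |ρ j| := fun j ω =>
    (norm_sub_le _ _).trans (add_le_add (hPb ω j) le_rfl)
  -- integrability of P and P*P
  have hPint : ∀ j, Integrable (fun ω => P ω j) μ := by
    intro j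
    have h := (integrable_const (μ := μ) (1:ℝ)).bdd_mul (hPj j).aestronglyMeasurable
      (ae_of_all _ fun ω => hPb ω j)
    simpa using h
  have hPPint : ∀ j k, Integrable (fun ω => P ω j * P ω k) μ := fun j k =>
    (hPint k).bdd_mul (hPj j).aestronglyMeasurable (ae_of_all _ fun ω => hPb ω j)
  -- L2 memberships
  have hPX2 : ∀ j, MemLp (fun ω => (P ω j - ρ j) * X ω j) 2 μ := by
    intro j
    refine MemLp.of_le_mul (c := 1 + |ρ j|) (hX2 j)
      (((hPj j).sub measurable_const).mul (hXj j)).aestronglyMeasurable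
      (Filter.Eventually.of_forall fun ω => ?_)
    rw [norm_mul]
    exact mul_le_mul_of_nonneg_right (hPmb j ω) (norm_nonneg _)
  set b : Ω → ℝ := fun ω => Y ω - ∑ j, (ρ j * θimp j) * X ω j with hbdef
  set W : Ω → ℝ := fun ω => ∑ j, θimp j * ((P ω j - ρ j) * X ω j) with hWdef
  have hsum2 : MemLp (fun ω => ∑ j, (ρ j * θimp j) * X ω j) 2 μ :=
    memLp_finsetSum _ fun j _ => (hX2 j).const_mul _
  have hb2 : MemLp b 2 μ := hY2.sub hsum2
  have hW2 : MemLp W 2 μ := memLp_finsetSum _ fun j _ => (hPX2 j).const_mul _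
  have hbmeas : Measurable b := by
    apply hYm.sub
    exact Finset.measurable_sum _ fun j _ => (hXj j).const_mul _
  have hbW : Integrable (fun ω => b ω * W ω) μ := aux_mulL1 hb2 hW2
  have hb2i : Integrable (fun ω => b ω ^ 2) μ := hb2.integrable_sq
  have hW2i : Integrable (fun ω => W ω ^ 2) μ := hW2.integrable_sq
  have hXX : ∀ j k, Integrable (fun ω => X ω j * X ω k) μ := fun j k =>
    aux_mulL1 (hX2 j) (hX2 k)
  have hbX : ∀ j, Integrable (fun ω => b ω * X ω j) μ := fun j => aux_mulL1 hb2 (hX2 j)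
  -- independence tool
  have hindep : ∀ (φ : (Fin d → ℝ) × ℝ → ℝ) (ψ : (Fin d → ℝ) → ℝ),
      Measurable φ → Measurable ψ →
      ∫ ω, ψ (P ω) * φ (X ω, Y ω) ∂μ
        = (∫ ω, ψ (P ω) ∂μ) * ∫ ω, φ (X ω, Y ω) ∂μ := by
    intro φ ψ hφ hψ
    have h := ((hMCAR.comp hφ hψ).symm).integral_mul_eq_mul_integral
      (hψ.comp hPm).aestronglyMeasurable (hφ.comp (hXm.prodMk hYm)).aestronglyMeasurable
    simpa [Function.comp] using h
  -- centered P integrals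
  have hPzero : ∀ j, ∫ ω, (P ω j - ρ j) ∂μ = 0 := by
    intro j
    rw [integral_sub (hPint j) (integrable_const _), integral_const]
    simp [hρ]
  have hPPc : ∀ j k, ∫ ω, (P ω j - ρ j) * (P ω k - ρ k) ∂μ = V j k := by
    intro j k
    have hexp : ∀ ω, (P ω j - ρ j) * (P ω k - ρ k)
        = P ω j * P ω k - ρ j * P ω k - ρ k * P ω j + ρ j * ρ k := fun ω => by ring
    rw [integral_congr_ae (Filter.Eventually.of_forall hexp)]
    have hi1 : Integrable (fun ω => P ω j * P ω k - ρ j * P ω k) μ :=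
      (hPPint j k).sub ((hPint k).const_mul _)
    have hi2 : Integrable (fun ω => P ω j * P ω k - ρ j * P ω k - ρ k * P ω j) μ :=
      hi1.sub ((hPint j).const_mul _)
    rw [integral_add hi2 (integrable_const _), integral_sub hi1 ((hPint j).const_mul _),
      integral_sub (hPPint j k) ((hPint k).const_mul _),
      integral_const_mul, integral_const_mul, integral_const]
    rw [hV]
    simp only [Matrix.of_apply]
    simp [hρ]
    ring
  -- pointwise decomposition
  have hpt : ∀ ω, Y ω - ∑ j, θimp j * (P ω j * X ω j) = b ω - W ω := by
    intro ω
    have h1 : ∑ j, θimp j * (P ω j * X ω j)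
        = (∑ j, (ρ j * θimp j) * X ω j) + ∑ j, θimp j * ((P ω j - ρ j) * X ω j) := by
      rw [← Finset.sum_add_distrib]
      exact Finset.sum_congr rfl fun j _ => by ring
    simp only [hbdef, hWdef]
    rw [h1]; ring
  have hRimpEq : Rimp θimp
      = (∫ ω, b ω ^ 2 ∂μ) - 2 * (∫ ω, b ω * W ω ∂μ) + ∫ ω, W ω ^ 2 ∂μ := by
    rw [hRimp]
    have h2 : ∀ ω, (Y ω - ∑ j, θimp j * (P ω j * X ω j)) ^ 2
        = (b ω ^ 2 + W ω ^ 2) - 2 * (b ω * W ω) := by intro ω; rw [hpt]; ring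
    have hi3 : Integrable (fun ω => b ω ^ 2 + W ω ^ 2) μ := hb2i.add hW2i
    rw [integral_congr_ae (Filter.Eventually.of_forall h2),
      integral_sub hi3 (hbW.const_mul 2),
      integral_add hb2i hW2i, integral_const_mul]
    ring
  have hRrho : R (fun j => ρ j * θimp j) = ∫ ω, b ω ^ 2 ∂μ := by
    rw [hR]
  -- cross term vanishes
  have hbWzero : ∫ ω, b ω * W ω ∂μ = 0 := by
    have hptbW : ∀ ω, b ω * W ω
        = ∑ j, θimp j * ((P ω j - ρ j) * (b ω * X ω j)) := by
      intro ω
      simp only [hWdef]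
      rw [Finset.mul_sum]
      exact Finset.sum_congr rfl fun j _ => by ring
    have hint1 : ∀ j, Integrable (fun ω => (P ω j - ρ j) * (b ω * X ω j)) μ := fun j =>
      (hbX j).bdd_mul ((hPj j).sub measurable_const).aestronglyMeasurable
        (ae_of_all _ fun ω => hPmb j ω)
    rw [integral_congr_ae (Filter.Eventually.of_forall hptbW),
      integral_finset_sum _ (fun j _ => (hint1 j).const_mul _)]
    refine Finset.sum_eq_zero fun j _ => ?_
    rw [integral_const_mul]
    have hφ : Measurable fun p : (Fin d → ℝ) × ℝ =>
        (p.2 - ∑ k, (ρ k * θimp k) * p.1 k) * p.1 j := by fun_prop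
    have hψ : Measurable fun q : Fin d → ℝ => q j - ρ j := by fun_prop
    have h := hindep _ _ hφ hψ
    simp only at h
    simp only [hbdef]
    rw [h, hPzero j, zero_mul, mul_zero]
  -- second moment term
  have hPPXXint : ∀ j k, Integrable
      (fun ω => ((P ω j - ρ j) * (P ω k - ρ k)) * (X ω j * X ω k)) μ := fun j k =>
    (hXX j k).bdd_mul
      ((((hPj j).sub measurable_const).mul ((hPj k).sub measurable_const)).aestronglyMeasurable)
      (ae_of_all _ fun ω => by
        rw [norm_mul]
        exact mul_le_mul (hPmb j ω) (hPmb k ω) (norm_nonneg _)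
          (le_trans (norm_nonneg _) (hPmb j ω)))
  have hW2eq : ∫ ω, W ω ^ 2 ∂μ
      = ∑ j, ∑ k, (θimp j * θimp k) * (V j k * ∫ ω, X ω j * X ω k ∂μ) := by
    have hptW : ∀ ω, W ω ^ 2 = ∑ j, ∑ k,
        (θimp j * θimp k) * (((P ω j - ρ j) * (P ω k - ρ k)) * (X ω j * X ω k)) := by
      intro ω
      simp only [hWdef, sq]
      rw [Finset.sum_mul_sum]
      exact Finset.sum_congr rfl fun j _ => Finset.sum_congr rfl fun k _ => by ring
    rw [integral_congr_ae (Filter.Eventually.of_forall hptW),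
      integral_finset_sum _ (fun j _ =>
        integrable_finset_sum _ (fun k _ => (hPPXXint j k).const_mul _))]
    refine Finset.sum_congr rfl fun j _ => ?_
    rw [integral_finset_sum _ (fun k _ => (hPPXXint j k).const_mul _)]
    refine Finset.sum_congr rfl fun k _ => ?_
    rw [integral_const_mul]
    congr 1
    have hφ : Measurable fun p : (Fin d → ℝ) × ℝ => p.1 j * p.1 k := by fun_prop
    have hψ : Measurable fun q : Fin d → ℝ => (q j - ρ j) * (q k - ρ k) := by fun_prop
    have h := hindep _ _ hφ hψ
    simp only at h
    rw [h, hPPc j k]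
  -- quadratic form bound
  have hXsq2 : ∀ j, Integrable (fun ω => (θimp j * X ω j) ^ 2) μ :=
    fun j => ((hX2 j).const_mul (θimp j)).integrable_sq
  have hquadpt : ∀ ω, (fun i => θimp i * X ω i) ⬝ᵥ V.mulVec (fun i => θimp i * X ω i)
      = ∑ j, ∑ k, (θimp j * θimp k) * (V j k * (X ω j * X ω k)) := by
    intro ω
    simp only [dotProduct, mulVec, Finset.mul_sum]
    exact Finset.sum_congr rfl fun j _ => Finset.sum_congr rfl fun k _ => by ring
  have hquadint : Integrable
      (fun ω => (fun i => θimp i * X ω i) ⬝ᵥ V.mulVec (fun i => θimp i * X ω i)) μ := by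
    have h := integrable_finset_sum (μ := μ)
      (f := fun j ω => ∑ k, (θimp j * θimp k) * (V j k * (X ω j * X ω k))) Finset.univ
      (fun j _ => integrable_finset_sum _ fun k _ => ((hXX j k).const_mul _).const_mul _)
    exact h.congr (Filter.Eventually.of_forall fun ω => (hquadpt ω).symm)
  have hQeq : ∑ j, ∑ k, (θimp j * θimp k) * (V j k * ∫ ω, X ω j * X ω k ∂μ)
      = ∫ ω, (fun i => θimp i * X ω i) ⬝ᵥ V.mulVec (fun i => θimp i * X ω i) ∂μ := by
    rw [integral_congr_ae (Filter.Eventually.of_forall hquadpt),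
      integral_finset_sum (f := fun j ω => ∑ k, (θimp j * θimp k) * (V j k * (X ω j * X ω k))) _ (fun j _ =>
        integrable_finset_sum _ fun k _ => ((hXX j k).const_mul _).const_mul _)]
    refine Finset.sum_congr rfl fun j _ => ?_
    rw [integral_finset_sum (f := fun k ω => (θimp j * θimp k) * (V j k * (X ω j * X ω k))) _ (fun k _ => ((hXX j k).const_mul _).const_mul _)]
    refine Finset.sum_congr rfl fun k _ => ?_
    rw [integral_const_mul, integral_const_mul]
  have hlow : ∫ ω, lam * ∑ j, (θimp j * X ω j) ^ 2 ∂μ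
      ≤ ∫ ω, (fun i => θimp i * X ω i) ⬝ᵥ V.mulVec (fun i => θimp i * X ω i) ∂μ := by
    refine integral_mono ((integrable_finset_sum _ fun j _ => hXsq2 j).const_mul lam)
      hquadint ?_
    intro ω
    exact aux_eig hVpd.1 _
  have hlow2 : ∫ ω, lam * ∑ j, (θimp j * X ω j) ^ 2 ∂μ
      = lam * ∑ j, θimp j ^ 2 * ∫ ω, X ω j ^ 2 ∂μ := by
    rw [integral_const_mul, integral_finset_sum _ fun j _ => hXsq2 j]
    congr 1
    refine Finset.sum_congr rfl fun j _ => ?_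
    have hsq : ∀ ω, (θimp j * X ω j) ^ 2 = θimp j ^ 2 * X ω j ^ 2 := fun ω => by ring
    rw [integral_congr_ae (Filter.Eventually.of_forall hsq), integral_const_mul]
  -- assemble
  have hRimpR : lam * ∑ j, θimp j ^ 2 * ∫ ω, X ω j ^ 2 ∂μ ≤ Rimp θimp - R θs := by
    have h1 : R θs ≤ R (fun j => ρ j * θimp j) := hθs _
    have h2 : Rimp θimp = R (fun j => ρ j * θimp j)
        + ∑ j, ∑ k, (θimp j * θimp k) * (V j k * ∫ ω, X ω j * X ω k ∂μ) := by
      rw [hRimpEq, hbWzero, hRrho, hW2eq]; ring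
    have h3 : lam * ∑ j, θimp j ^ 2 * ∫ ω, X ω j ^ 2 ∂μ
        ≤ ∑ j, ∑ k, (θimp j * θimp k) * (V j k * ∫ ω, X ω j * X ω k ∂μ) := by
      rw [← hlow2, hQeq]; exact hlow
    linarith
  rw [le_div_iff₀ (mul_pos (pow_pos hl 2) hlampos)]
  have h4 : ∑ j, θimp j ^ 2 * l ^ 2 ≤ ∑ j, θimp j ^ 2 * ∫ ω, X ω j ^ 2 ∂μ :=
    Finset.sum_le_sum fun j _ => mul_le_mul_of_nonneg_left (hmom j) (sq_nonneg _)
  have h5 : (∑ j, θimp j ^ 2) * (l ^ 2 * lam) = lam * ∑ j, θimp j ^ 2 * l ^ 2 := by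
    rw [Finset.sum_mul, Finset.mul_sum]
    exact Finset.sum_congr rfl fun j _ => by ring
  calc (∑ j, θimp j ^ 2) * (l ^ 2 * lam) = lam * ∑ j, θimp j ^ 2 * l ^ 2 := h5
    _ ≤ lam * ∑ j, θimp j ^ 2 * ∫ ω, X ω j ^ 2 ∂μ :=
        mul_le_mul_of_nonneg_left h4 hlampos.le
    _ ≤ Rimp θimp - R θs := hRimpR
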